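/- Let B be a weak Hopf *-algebra with right adjoint action b ◁ x := S(x₍₁₎) b x₍₂₎, and let I and I' be invariant coideals of B. Then I ∩ I' and the *-subalgebra of B generated by I ∪ I' are again invariant coideals of B. Thus the invariant coideals of B form a sublattice of the lattice of all coideals, with minimal element B_s and maximal element the commutant of B_t in B. -/

import Mathlib

open scoped TensorProduct
open TensorProduct

noncomputable section

/-- The conjugate-linear "star" operation on a tensor product of two star modules,
defined via a choice of bases so that `star (x ⊗ y) = star x ⊗ star y`. -/
def tensorStar (M N : Type) [AddCommGroup M] [Module ℂ M] [Module.Finite ℂ M]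
    [Module.Free ℂ M] [StarAddMonoid M] [AddCommGroup N] [Module ℂ N] [Module.Finite ℂ N]
    [Module.Free ℂ N] [StarAddMonoid N] (t : M ⊗[ℂ] N) : M ⊗[ℂ] N :=
  let bM := Module.Free.chooseBasis ℂ M
  let bN := Module.Free.chooseBasis ℂ N
  ∑ p : Module.Free.ChooseBasisIndex ℂ M × Module.Free.ChooseBasisIndex ℂ N,
    (starRingEnd ℂ) (((bM.tensorProduct bN).repr t) p) • (star (bM p.1) ⊗ₜ[ℂ] star (bN p.2))

/-- A weak Hopf `*`-algebra structure on a finite-dimensional `C*`-algebra `B`. -/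
structure WHA (B : Type) [NormedRing B] [StarRing B] [CStarRing B] [NormedAlgebra ℂ B]
    [StarModule ℂ B] [FiniteDimensional ℂ B] where
  Δ : B →ₗ[ℂ] B ⊗[ℂ] B
  ε : B →ₗ[ℂ] ℂ
  S : B →ₗ[ℂ] B
  coassoc : ∀ b : B, (TensorProduct.assoc ℂ B B B) ((TensorProduct.map Δ LinearMap.id) (Δ b)) =
    (TensorProduct.map LinearMap.id Δ) (Δ b)
  counit_left : ∀ b : B, (TensorProduct.lid ℂ B) ((TensorProduct.map ε LinearMap.id) (Δ b)) = b
  counit_right : ∀ b : B, (TensorProduct.rid ℂ B) ((TensorProduct.map LinearMap.id ε) (Δ b)) = b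
  comul_mul : ∀ a b : B, Δ (a * b) = Δ a * Δ b
  weak_counit : ∀ b c d : B, (TensorProduct.lid ℂ ℂ)
      ((TensorProduct.map (ε ∘ₗ LinearMap.mulLeft ℂ b) (ε ∘ₗ LinearMap.mulRight ℂ d)) (Δ c)) =
    ε (b * c * d)
  weak_comul_one : (TensorProduct.map Δ LinearMap.id) (Δ 1) =
    (Δ 1 ⊗ₜ[ℂ] (1 : B)) * ((TensorProduct.assoc ℂ B B B).symm ((1 : B) ⊗ₜ[ℂ] Δ 1))
  comul_star : ∀ b : B, Δ (star b) = tensorStar B B (Δ b)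
  antipode_mul : ∀ a b : B, S (a * b) = S b * S a
  antipode_one : S 1 = 1
  antipode_comul : ∀ b : B, Δ (S b) =
    (TensorProduct.map S S) ((TensorProduct.comm ℂ B B) (Δ b))
  counit_antipode : ∀ b : B, ε (S b) = ε b
  antipode_left : ∀ b : B, LinearMap.mul' ℂ B ((TensorProduct.map LinearMap.id S) (Δ b)) =
    (TensorProduct.lid ℂ B) ((TensorProduct.map ε LinearMap.id) (Δ 1 * (b ⊗ₜ[ℂ] (1 : B))))
  antipode_right : ∀ b : B, LinearMap.mul' ℂ B ((TensorProduct.map S LinearMap.id) (Δ b)) =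
    (TensorProduct.rid ℂ B) ((TensorProduct.map LinearMap.id ε) (((1 : B) ⊗ₜ[ℂ] b) * Δ 1))

namespace WHA

variable {B : Type} [NormedRing B] [StarRing B] [CStarRing B] [NormedAlgebra ℂ B]
  [StarModule ℂ B] [FiniteDimensional ℂ B]

/-- The target counital map `ε_t(b) = (ε ⊗ id)(Δ(1)(b ⊗ 1))`. -/
def εt (W : WHA B) (b : B) : B :=
  (TensorProduct.lid ℂ B) ((TensorProduct.map W.ε LinearMap.id) (W.Δ 1 * (b ⊗ₜ[ℂ] (1 : B))))

/-- The source counital map `ε_s(b) = (id ⊗ ε)((1 ⊗ b)Δ(1))`. -/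
def εs (W : WHA B) (b : B) : B :=
  (TensorProduct.rid ℂ B) ((TensorProduct.map LinearMap.id W.ε) (((1 : B) ⊗ₜ[ℂ] b) * W.Δ 1))

/-- The target counital subalgebra `B_t = ε_t(B)`. -/
def Bt (W : WHA B) : Submodule ℂ B := Submodule.span ℂ (Set.range W.εt)

/-- The source counital subalgebra `B_s = ε_s(B)`. -/
def Bs (W : WHA B) : Submodule ℂ B := Submodule.span ℂ (Set.range W.εs)

/-- The right adjoint action `b ◁ x = S(x₍₁₎) b x₍₂₎`. -/
def ad (W : WHA B) (b x : B) : B :=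
  LinearMap.mul' ℂ B ((TensorProduct.map W.S (LinearMap.mulLeft ℂ b)) (W.Δ x))

/-- `I` is a (right) coideal of `B`: a unital `*`-subalgebra with `Δ(I) ⊆ I ⊗ B`. -/
def IsCoideal (W : WHA B) (I : Submodule ℂ B) : Prop :=
  (1 : B) ∈ I ∧ (∀ a ∈ I, ∀ b ∈ I, a * b ∈ I) ∧ (∀ a ∈ I, star a ∈ I) ∧
    ∀ a ∈ I, W.Δ a ∈ Submodule.span ℂ {x : B ⊗[ℂ] B | ∃ u ∈ I, ∃ v : B, x = u ⊗ₜ[ℂ] v}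

/-- A coideal is invariant if `span{ b ◁ x : b ∈ I, x ∈ B } = I`. -/
def IsInvariant (W : WHA B) (I : Submodule ℂ B) : Prop :=
  Submodule.span ℂ {y : B | ∃ b ∈ I, ∃ x : B, y = W.ad b x} = I

end WHA

/-- A morphism of weak Hopf `*`-algebras. -/
structure WHAHom {B C : Type} [NormedRing B] [StarRing B] [CStarRing B] [NormedAlgebra ℂ B]
    [StarModule ℂ B] [FiniteDimensional ℂ B] [NormedRing C] [StarRing C] [CStarRing C]
    [NormedAlgebra ℂ C] [StarModule ℂ C] [FiniteDimensional ℂ C]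
    (W : WHA B) (W' : WHA C) where
  π : B →⋆ₐ[ℂ] C
  comul_comp : ∀ b : B, W'.Δ (π b) = (TensorProduct.map π.toLinearMap π.toLinearMap) (W.Δ b)
  antipode_comp : ∀ b : B, W'.S (π b) = π (W.S b)
  counit_comp : ∀ b : B, W'.ε (π b) = W.ε b


set_option linter.unusedSectionVars false

section TensorStarLemmas

variable (M N : Type) [AddCommGroup M] [Module ℂ M] [Module.Finite ℂ M]
    [Module.Free ℂ M] [StarAddMonoid M] [AddCommGroup N] [Module ℂ N] [Module.Finite ℂ N]
    [Module.Free ℂ N] [StarAddMonoid N]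

lemma tensorStar_add (t s : M ⊗[ℂ] N) :
    tensorStar M N (t + s) = tensorStar M N t + tensorStar M N s := by
  unfold tensorStar
  simp only [map_add, Finsupp.add_apply, map_add, add_smul, Finset.sum_add_distrib]

lemma tensorStar_zero : tensorStar M N 0 = 0 := by
  unfold tensorStar; simp

lemma tensorStar_smul (c : ℂ) (t : M ⊗[ℂ] N) :
    tensorStar M N (c • t) = (starRingEnd ℂ) c • tensorStar M N t := by
  unfold tensorStar
  simp only [map_smul, Finsupp.smul_apply, smul_eq_mul, map_mul, Finset.smul_sum, smul_smul]

lemma star_eq_sum_basis {ι : Type*} [Fintype ι] (b : Module.Basis ι ℂ M) [StarModule ℂ M] (x : M) :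
    star x = ∑ i, (starRingEnd ℂ) (b.repr x i) • star (b i) := by
  conv_lhs => rw [← b.sum_repr x]
  rw [star_sum]
  refine Finset.sum_congr rfl fun i _ => ?_
  rw [star_smul, starRingEnd_apply]

lemma tensorStar_tmul [StarModule ℂ M] [StarModule ℂ N] (x : M) (y : N) :
    tensorStar M N (x ⊗ₜ[ℂ] y) = star x ⊗ₜ[ℂ] star y := by
  unfold tensorStar
  rw [star_eq_sum_basis M (Module.Free.chooseBasis ℂ M) x,
      star_eq_sum_basis N (Module.Free.chooseBasis ℂ N) y,
      TensorProduct.sum_tmul]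
  rw [Fintype.sum_prod_type]
  refine Finset.sum_congr rfl fun i _ => ?_
  rw [TensorProduct.tmul_sum]
  refine Finset.sum_congr rfl fun j _ => ?_
  rw [Module.Basis.tensorProduct_repr_tmul_apply]
  simp only [smul_eq_mul, map_mul, TensorProduct.smul_tmul', smul_smul]
  rw [TensorProduct.tmul_smul, TensorProduct.smul_tmul', smul_smul, mul_comm]

end TensorStarLemmas
section StarInstances

variable {B : Type} [NormedRing B] [StarRing B] [CStarRing B] [NormedAlgebra ℂ B]
  [StarModule ℂ B] [FiniteDimensional ℂ B]

/-- Star structure on `B ⊗ B` given by `tensorStar`. -/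
lemma star2_def (t : B ⊗[ℂ] B) : star t = tensorStar B B t := by
  induction t using TensorProduct.induction_on with
  | zero => rw [star_zero, tensorStar_zero]
  | tmul x y => rw [TensorProduct.star_tmul, tensorStar_tmul]
  | add u v hu hv => rw [star_add, tensorStar_add, hu, hv]

lemma star2_tmul (x y : B) : star (x ⊗ₜ[ℂ] y) = star x ⊗ₜ[ℂ] star y :=
  TensorProduct.star_tmul x y

lemma star2_mul (t u : B ⊗[ℂ] B) : star (t * u) = star u * star t := by
  induction t using TensorProduct.induction_on with
  | zero => simp
  | add a b ha hb => rw [add_mul, star_add, star_add, ha, hb, mul_add]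
  | tmul x y =>
    induction u using TensorProduct.induction_on with
    | zero => simp
    | add a b ha hb => rw [mul_add, star_add, star_add, ha, hb, add_mul]
    | tmul p q =>
      rw [Algebra.TensorProduct.tmul_mul_tmul, star2_tmul, star2_tmul, star2_tmul,
        Algebra.TensorProduct.tmul_mul_tmul, star_mul, star_mul]

/-- componentwise star on `(B ⊗ B) ⊗ B`. -/
noncomputable def st3 (t : (B ⊗[ℂ] B) ⊗[ℂ] B) : (B ⊗[ℂ] B) ⊗[ℂ] B :=
  tensorStar (B ⊗[ℂ] B) B t

lemma st3_add (t u : (B ⊗[ℂ] B) ⊗[ℂ] B) : st3 (t + u) = st3 t + st3 u :=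
  tensorStar_add _ _ t u

lemma st3_zero : st3 (0 : (B ⊗[ℂ] B) ⊗[ℂ] B) = 0 := tensorStar_zero _ _

lemma st3_tmul (t : B ⊗[ℂ] B) (z : B) : st3 (t ⊗ₜ[ℂ] z) = star t ⊗ₜ[ℂ] star z :=
  tensorStar_tmul _ _ t z

lemma st3_mul (t u : (B ⊗[ℂ] B) ⊗[ℂ] B) : st3 (t * u) = st3 u * st3 t := by
  induction t using TensorProduct.induction_on with
  | zero => simp [st3_zero]
  | add a b ha hb => rw [add_mul, st3_add, st3_add, ha, hb, mul_add]
  | tmul P z =>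
    induction u using TensorProduct.induction_on with
    | zero => simp [st3_zero]
    | add a b ha hb => rw [mul_add, st3_add, st3_add, ha, hb, add_mul]
    | tmul Q y =>
      rw [Algebra.TensorProduct.tmul_mul_tmul, st3_tmul, st3_tmul, st3_tmul,
        Algebra.TensorProduct.tmul_mul_tmul, star2_mul, star_mul]

end StarInstances

namespace WHA

variable {B : Type} [NormedRing B] [StarRing B] [CStarRing B] [NormedAlgebra ℂ B]
  [StarModule ℂ B] [FiniteDimensional ℂ B] (W : WHA B)

lemma star2_D : star (W.Δ 1) = W.Δ 1 := by
  rw [star2_def, ← W.comul_star, star_one]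

/-- The second form of the weak comultiplication axiom, derived using the `*`-structure. -/
lemma weak_comul_one' : (TensorProduct.map W.Δ LinearMap.id) (W.Δ 1) =
    ((TensorProduct.assoc ℂ B B B).symm ((1 : B) ⊗ₜ[ℂ] W.Δ 1)) * (W.Δ 1 ⊗ₜ[ℂ] (1 : B)) := by
  have h1 : st3 ((TensorProduct.map W.Δ LinearMap.id) (W.Δ 1)) =
      (TensorProduct.map W.Δ LinearMap.id) (W.Δ 1) := by
    have key : ∀ t : B ⊗[ℂ] B, st3 ((TensorProduct.map W.Δ LinearMap.id) t) =
        (TensorProduct.map W.Δ LinearMap.id) (star t) := by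
      intro t
      induction t using TensorProduct.induction_on with
      | zero => simp [st3_zero]
      | add a b ha hb => rw [map_add, st3_add, ha, hb, star_add, map_add]
      | tmul x y =>
        rw [TensorProduct.map_tmul, st3_tmul, star2_tmul, TensorProduct.map_tmul,
          star2_def, ← W.comul_star]
        rfl
    rw [key, star2_D]
  have h2 : st3 ((W.Δ 1 ⊗ₜ[ℂ] (1 : B)) * ((TensorProduct.assoc ℂ B B B).symm ((1 : B) ⊗ₜ[ℂ] W.Δ 1))) =
      ((TensorProduct.assoc ℂ B B B).symm ((1 : B) ⊗ₜ[ℂ] W.Δ 1)) * (W.Δ 1 ⊗ₜ[ℂ] (1 : B)) := by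
    rw [st3_mul, st3_tmul, star2_D, star_one]
    congr 1
    have key : ∀ t : B ⊗[ℂ] B, st3 ((TensorProduct.assoc ℂ B B B).symm ((1 : B) ⊗ₜ[ℂ] t)) =
        (TensorProduct.assoc ℂ B B B).symm ((1 : B) ⊗ₜ[ℂ] star t) := by
      intro t
      induction t using TensorProduct.induction_on with
      | zero =>
        rw [TensorProduct.tmul_zero, LinearEquiv.map_zero, st3_zero, star_zero,
          TensorProduct.tmul_zero, LinearEquiv.map_zero]
      | add a b ha hb =>
        rw [TensorProduct.tmul_add, LinearEquiv.map_add, st3_add, ha, hb, star_add,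
          TensorProduct.tmul_add, LinearEquiv.map_add]
      | tmul x y =>
        rw [TensorProduct.assoc_symm_tmul, st3_tmul, star2_tmul, star2_tmul, star_one,
          TensorProduct.assoc_symm_tmul]
    rw [key, star2_D]
  rw [← h1, W.weak_comul_one, h2]

end WHA
set_option synthInstance.maxHeartbeats 1000000
set_option maxHeartbeats 1000000

namespace WHA

variable {B : Type} [NormedRing B] [StarRing B] [CStarRing B] [NormedAlgebra ℂ B]
  [StarModule ℂ B] [FiniteDimensional ℂ B] (W : WHA B)

/-- `ε_t` as a linear map. -/
noncomputable def εtL : B →ₗ[ℂ] B :=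
  (TensorProduct.lid ℂ B).toLinearMap ∘ₗ TensorProduct.map W.ε LinearMap.id ∘ₗ
    LinearMap.mulLeft ℂ (W.Δ 1) ∘ₗ (TensorProduct.mk ℂ B B).flip 1

/-- `ε_s` as a linear map. -/
noncomputable def εsL : B →ₗ[ℂ] B :=
  (TensorProduct.rid ℂ B).toLinearMap ∘ₗ TensorProduct.map LinearMap.id W.ε ∘ₗ
    LinearMap.mulRight ℂ (W.Δ 1) ∘ₗ TensorProduct.mk ℂ B B 1

/-- The auxiliary map `η(w) = (id ⊗ ε)(Δ(1)(1 ⊗ w))`. -/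
noncomputable def ηL : B →ₗ[ℂ] B :=
  (TensorProduct.rid ℂ B).toLinearMap ∘ₗ TensorProduct.map LinearMap.id W.ε ∘ₗ
    LinearMap.mulLeft ℂ (W.Δ 1) ∘ₗ TensorProduct.mk ℂ B B 1

lemma εtL_apply (b : B) : W.εtL b = W.εt b := rfl

lemma εsL_apply (b : B) : W.εsL b = W.εs b := rfl

lemma Δ_one_mul (x : B) : W.Δ 1 * W.Δ x = W.Δ x := by rw [← W.comul_mul, one_mul]

lemma Δ_mul_one (x : B) : W.Δ x * W.Δ 1 = W.Δ x := by rw [← W.comul_mul, mul_one]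

/-- restatement of `antipode_left`. -/
lemma antipode_left' (b : B) :
    LinearMap.mul' ℂ B ((TensorProduct.map LinearMap.id W.S) (W.Δ b)) = W.εtL b :=
  W.antipode_left b

/-- restatement of `antipode_right`. -/
lemma antipode_right' (b : B) :
    LinearMap.mul' ℂ B ((TensorProduct.map W.S LinearMap.id) (W.Δ b)) = W.εsL b :=
  W.antipode_right b

section Rep

variable (s : Finset (B × B)) (hs : W.Δ 1 = ∑ p ∈ s, p.1 ⊗ₜ[ℂ] p.2)

include hs

lemma sum_eps_smul_right : ∑ p ∈ s, W.ε p.1 • p.2 = 1 := by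
  have h := W.counit_left 1
  rw [hs] at h
  simpa [TensorProduct.map_tmul, TensorProduct.lid_tmul] using h

lemma sum_eps_smul_left : ∑ p ∈ s, W.ε p.2 • p.1 = 1 := by
  have h := W.counit_right 1
  rw [hs] at h
  simpa [TensorProduct.map_tmul, TensorProduct.rid_tmul] using h

lemma sum_S_mul : ∑ p ∈ s, W.S p.1 * p.2 = 1 := by
  have h := W.antipode_right 1
  rw [show ((1:B) ⊗ₜ[ℂ] (1:B)) * W.Δ 1 = W.Δ 1 by
    rw [← Algebra.TensorProduct.one_def, one_mul]] at h
  rw [hs] at h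
  simp only [map_sum, TensorProduct.map_tmul, LinearMap.mul'_apply, LinearMap.id_coe, id_eq,
    TensorProduct.rid_tmul] at h
  rw [h, sum_eps_smul_left W s hs]

lemma sum_mul_S : ∑ p ∈ s, p.1 * W.S p.2 = 1 := by
  have h := W.antipode_left 1
  rw [show W.Δ 1 * ((1:B) ⊗ₜ[ℂ] (1:B)) = W.Δ 1 by
    rw [← Algebra.TensorProduct.one_def, mul_one]] at h
  rw [hs] at h
  simp only [map_sum, TensorProduct.map_tmul, LinearMap.mul'_apply, LinearMap.id_coe, id_eq,
    TensorProduct.lid_tmul] at h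
  rw [h, sum_eps_smul_right W s hs]

lemma εtL_rep (y : B) : W.εtL y = ∑ p ∈ s, W.ε (p.1 * y) • p.2 := by
  show (TensorProduct.lid ℂ B) ((TensorProduct.map W.ε LinearMap.id) (W.Δ 1 * (y ⊗ₜ[ℂ] 1))) = _
  rw [hs, Finset.sum_mul]
  simp [Algebra.TensorProduct.tmul_mul_tmul, TensorProduct.map_tmul, TensorProduct.lid_tmul]

lemma εsL_rep (y : B) : W.εsL y = ∑ p ∈ s, W.ε (y * p.2) • p.1 := by
  show (TensorProduct.rid ℂ B) ((TensorProduct.map LinearMap.id W.ε) (((1:B) ⊗ₜ[ℂ] y) * W.Δ 1)) = _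
  rw [hs, Finset.mul_sum]
  simp [Algebra.TensorProduct.tmul_mul_tmul, TensorProduct.map_tmul, TensorProduct.rid_tmul]

lemma ηL_rep (w : B) : W.ηL w = ∑ p ∈ s, W.ε (p.2 * w) • p.1 := by
  show (TensorProduct.rid ℂ B) ((TensorProduct.map LinearMap.id W.ε) (W.Δ 1 * ((1:B) ⊗ₜ[ℂ] w))) = _
  rw [hs, Finset.sum_mul]
  simp [Algebra.TensorProduct.tmul_mul_tmul, TensorProduct.map_tmul, TensorProduct.rid_tmul]

lemma mapΔid_rep : (TensorProduct.map W.Δ LinearMap.id) (W.Δ 1) = ∑ p ∈ s, W.Δ p.1 ⊗ₜ[ℂ] p.2 := by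
  conv_lhs => rw [hs]
  simp [TensorProduct.map_tmul]

lemma W1_rep : (TensorProduct.map W.Δ LinearMap.id) (W.Δ 1) =
    ∑ q ∈ s, ∑ p ∈ s, (q.1 ⊗ₜ[ℂ] (q.2 * p.1)) ⊗ₜ[ℂ] p.2 := by
  rw [W.weak_comul_one]
  conv_lhs => rw [hs]
  rw [TensorProduct.sum_tmul, TensorProduct.tmul_sum, map_sum, Finset.sum_mul]
  refine Finset.sum_congr rfl fun q _ => ?_
  rw [Finset.mul_sum]
  refine Finset.sum_congr rfl fun p _ => ?_
  rw [TensorProduct.assoc_symm_tmul, Algebra.TensorProduct.tmul_mul_tmul,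
    Algebra.TensorProduct.tmul_mul_tmul, mul_one, one_mul]

lemma W2_rep : (TensorProduct.map W.Δ LinearMap.id) (W.Δ 1) =
    ∑ q ∈ s, ∑ p ∈ s, (q.1 ⊗ₜ[ℂ] (p.1 * q.2)) ⊗ₜ[ℂ] p.2 := by
  rw [W.weak_comul_one']
  conv_lhs => rw [hs]
  rw [TensorProduct.tmul_sum, map_sum, TensorProduct.sum_tmul, Finset.sum_mul_sum]
  rw [Finset.sum_comm]
  refine Finset.sum_congr rfl fun q _ => Finset.sum_congr rfl fun p _ => ?_
  rw [TensorProduct.assoc_symm_tmul, Algebra.TensorProduct.tmul_mul_tmul,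
    Algebra.TensorProduct.tmul_mul_tmul, mul_one, one_mul]

lemma mapidΔ_rep : (TensorProduct.map LinearMap.id W.Δ) (W.Δ 1) = ∑ p ∈ s, p.1 ⊗ₜ[ℂ] W.Δ p.2 := by
  conv_lhs => rw [hs]
  simp [TensorProduct.map_tmul]

lemma E8 : (TensorProduct.map LinearMap.id W.Δ) (W.Δ 1) =
    ∑ q ∈ s, ∑ p ∈ s, q.1 ⊗ₜ[ℂ] ((q.2 * p.1) ⊗ₜ[ℂ] p.2) := by
  rw [← W.coassoc 1, W1_rep W s hs]
  rw [map_sum]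
  refine Finset.sum_congr rfl fun q _ => ?_
  rw [map_sum]
  exact Finset.sum_congr rfl fun p _ => TensorProduct.assoc_tmul _ _ _

end Rep

end WHA
namespace WHA

variable {B : Type} [NormedRing B] [StarRing B] [CStarRing B] [NormedAlgebra ℂ B]
  [StarModule ℂ B] [FiniteDimensional ℂ B] (W : WHA B)

section Rep2

variable (s : Finset (B × B)) (hs : W.Δ 1 = ∑ p ∈ s, p.1 ⊗ₜ[ℂ] p.2)

include hs

/-- `(S ⊗ id)(Δ1) = (ε_t ⊗ id)(Δ1)`. -/
lemma star10 : ∑ p ∈ s, W.εtL p.1 ⊗ₜ[ℂ] p.2 = ∑ p ∈ s, W.S p.1 ⊗ₜ[ℂ] p.2 := by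
  have h := congrArg
    (TensorProduct.map (LinearMap.mul' ℂ B ∘ₗ TensorProduct.map LinearMap.id W.S) LinearMap.id)
    ((mapΔid_rep W s hs).symm.trans (W2_rep W s hs))
  simp only [map_sum, TensorProduct.map_tmul, LinearMap.comp_apply, LinearMap.id_coe, id_eq,
    LinearMap.mul'_apply, W.antipode_left'] at h
  rw [h, Finset.sum_comm]
  refine Finset.sum_congr rfl fun p _ => ?_
  rw [← TensorProduct.sum_tmul]
  congr 1
  calc ∑ q ∈ s, q.1 * W.S (p.1 * q.2)
      = (∑ q ∈ s, q.1 * W.S q.2) * W.S p.1 := by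
        rw [Finset.sum_mul]
        exact Finset.sum_congr rfl fun q _ => by rw [W.antipode_mul, mul_assoc]
    _ = W.S p.1 := by rw [sum_mul_S W s hs, one_mul]

/-- `Δ(ε_t(y)) = (ε_t(y) ⊗ 1) Δ(1)`. -/
lemma Δ_εtL (y : B) : W.Δ (W.εtL y) = (W.εtL y ⊗ₜ[ℂ] 1) * W.Δ 1 := by
  have key : ∑ p ∈ s, W.ε (p.1 * y) • W.Δ p.2
      = ∑ q ∈ s, ∑ p ∈ s, W.ε (q.1 * y) • ((q.2 * p.1) ⊗ₜ[ℂ] p.2) := by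
    have h := congrArg ((TensorProduct.lid ℂ (B ⊗[ℂ] B)).toLinearMap ∘ₗ
        TensorProduct.map (W.ε ∘ₗ LinearMap.mulRight ℂ y) LinearMap.id)
      ((mapidΔ_rep W s hs).symm.trans (E8 W s hs))
    simpa only [map_sum, LinearMap.comp_apply, TensorProduct.map_tmul,
      LinearEquiv.coe_toLinearMap, TensorProduct.lid_tmul, LinearMap.mulRight_apply,
      LinearMap.id_coe, id_eq] using h
  rw [εtL_rep W s hs, map_sum]
  simp only [map_smul]
  rw [key]
  conv_rhs => rw [hs]
  rw [TensorProduct.sum_tmul]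
  simp only [TensorProduct.smul_tmul']
  rw [Finset.sum_mul_sum]
  refine Finset.sum_congr rfl fun q _ => Finset.sum_congr rfl fun p _ => ?_
  rw [Algebra.TensorProduct.tmul_mul_tmul, smul_mul_assoc, one_mul]

/-- `Δ(1)(1 ⊗ w) = (η ⊗ id)(Δ w)`. -/
lemma T5d (w : B) :
    W.Δ 1 * ((1:B) ⊗ₜ[ℂ] w) = (TensorProduct.map W.ηL LinearMap.id) (W.Δ w) := by
  obtain ⟨t, ht⟩ := TensorProduct.exists_finset (W.Δ w)
  have claimA : ∀ u : B ⊗[ℂ] B,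
      (TensorProduct.map LinearMap.id
        ((TensorProduct.lid ℂ B).toLinearMap ∘ₗ TensorProduct.map W.ε LinearMap.id))
        ((TensorProduct.map LinearMap.id W.Δ) u) = u := by
    intro u
    induction u using TensorProduct.induction_on with
    | zero => simp
    | add a b ha hb => rw [map_add, map_add, ha, hb]
    | tmul x y =>
      rw [TensorProduct.map_tmul, TensorProduct.map_tmul]
      simp only [LinearMap.id_coe, id_eq, LinearMap.comp_apply, LinearEquiv.coe_toLinearMap]
      rw [W.counit_left y]
  have eA : (∑ p ∈ s, p.1 ⊗ₜ[ℂ] (p.2 ⊗ₜ[ℂ] (1:B))) * ((1:B) ⊗ₜ[ℂ] W.Δ 1)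
      = (TensorProduct.map LinearMap.id W.Δ) (W.Δ 1) := by
    rw [E8 W s hs, Finset.sum_mul]
    refine Finset.sum_congr rfl fun p _ => ?_
    conv_lhs => rw [hs]
    rw [TensorProduct.tmul_sum, Finset.mul_sum]
    refine Finset.sum_congr rfl fun q _ => ?_
    rw [Algebra.TensorProduct.tmul_mul_tmul, Algebra.TensorProduct.tmul_mul_tmul,
      mul_one, one_mul]
  have step1 : (TensorProduct.map LinearMap.id W.Δ) (W.Δ 1 * ((1:B) ⊗ₜ[ℂ] w))
      = ∑ p ∈ s, ∑ k ∈ t, p.1 ⊗ₜ[ℂ] ((p.2 * k.1) ⊗ₜ[ℂ] k.2) := by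
    have e1 : W.Δ 1 * ((1:B) ⊗ₜ[ℂ] w) = ∑ p ∈ s, p.1 ⊗ₜ[ℂ] (p.2 * w) := by
      rw [hs, Finset.sum_mul]
      exact Finset.sum_congr rfl fun p _ => by
        rw [Algebra.TensorProduct.tmul_mul_tmul, mul_one]
    rw [e1, map_sum]
    have e2 : ∑ p ∈ s, (TensorProduct.map LinearMap.id W.Δ) (p.1 ⊗ₜ[ℂ] (p.2 * w))
        = (∑ p ∈ s, p.1 ⊗ₜ[ℂ] (p.2 ⊗ₜ[ℂ] (1:B))) * ((1:B) ⊗ₜ[ℂ] (W.Δ 1 * W.Δ w)) := by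
      rw [show (1:B) ⊗ₜ[ℂ] (W.Δ 1 * W.Δ w) = ((1:B) ⊗ₜ[ℂ] W.Δ 1) * ((1:B) ⊗ₜ[ℂ] W.Δ w) by
        rw [Algebra.TensorProduct.tmul_mul_tmul, mul_one]]
      rw [← mul_assoc, eA, mapidΔ_rep W s hs, Finset.sum_mul]
      refine Finset.sum_congr rfl fun p _ => ?_
      rw [TensorProduct.map_tmul, Algebra.TensorProduct.tmul_mul_tmul, mul_one, W.comul_mul]
      rfl
    rw [e2, W.Δ_one_mul, Finset.sum_mul]
    refine Finset.sum_congr rfl fun p _ => ?_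
    conv_lhs => rw [ht]
    rw [TensorProduct.tmul_sum, Finset.mul_sum]
    refine Finset.sum_congr rfl fun k _ => ?_
    rw [Algebra.TensorProduct.tmul_mul_tmul, Algebra.TensorProduct.tmul_mul_tmul,
      mul_one, one_mul]
  have := congrArg (TensorProduct.map LinearMap.id
      ((TensorProduct.lid ℂ B).toLinearMap ∘ₗ TensorProduct.map W.ε LinearMap.id)) step1
  rw [claimA] at this
  rw [this]
  simp only [map_sum]
  rw [Finset.sum_comm, ht, map_sum]
  refine Finset.sum_congr rfl fun k _ => ?_
  rw [TensorProduct.map_tmul, ηL_rep W s hs, TensorProduct.sum_tmul]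
  refine Finset.sum_congr rfl fun p _ => ?_
  simp only [LinearMap.id_coe, id_eq, LinearMap.comp_apply, LinearEquiv.coe_toLinearMap,
    TensorProduct.map_tmul, TensorProduct.lid_tmul]
  rw [TensorProduct.tmul_smul, TensorProduct.smul_tmul']

/-- `Δ(1)(w ⊗ 1) = (id ⊗ ε_t)(Δ w)`. -/
lemma T5 (w : B) :
    W.Δ 1 * (w ⊗ₜ[ℂ] (1:B)) = (TensorProduct.map LinearMap.id W.εtL) (W.Δ w) := by
  obtain ⟨t, ht⟩ := TensorProduct.exists_finset (W.Δ w)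
  have claimA : ∀ u : B ⊗[ℂ] B,
      (TensorProduct.map
        ((TensorProduct.rid ℂ B).toLinearMap ∘ₗ TensorProduct.map LinearMap.id W.ε) LinearMap.id)
        ((TensorProduct.map W.Δ LinearMap.id) u) = u := by
    intro u
    induction u using TensorProduct.induction_on with
    | zero => simp
    | add a b ha hb => rw [map_add, map_add, ha, hb]
    | tmul x y =>
      rw [TensorProduct.map_tmul, TensorProduct.map_tmul]
      simp only [LinearMap.id_coe, id_eq, LinearMap.comp_apply, LinearEquiv.coe_toLinearMap]
      rw [W.counit_right x]
  have eA : (∑ p ∈ s, ((1:B) ⊗ₜ[ℂ] p.1) ⊗ₜ[ℂ] p.2) * (W.Δ 1 ⊗ₜ[ℂ] (1:B))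
      = (TensorProduct.map W.Δ LinearMap.id) (W.Δ 1) := by
    rw [W2_rep W s hs]
    conv_lhs => rw [hs]
    rw [TensorProduct.sum_tmul, Finset.sum_mul_sum, Finset.sum_comm]
    refine Finset.sum_congr rfl fun q _ => Finset.sum_congr rfl fun p _ => ?_
    rw [Algebra.TensorProduct.tmul_mul_tmul, Algebra.TensorProduct.tmul_mul_tmul,
      mul_one, one_mul]
  have step1 : (TensorProduct.map W.Δ LinearMap.id) (W.Δ 1 * (w ⊗ₜ[ℂ] (1:B)))
      = ∑ p ∈ s, ∑ k ∈ t, (k.1 ⊗ₜ[ℂ] (p.1 * k.2)) ⊗ₜ[ℂ] p.2 := by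
    have e1 : W.Δ 1 * (w ⊗ₜ[ℂ] (1:B)) = ∑ p ∈ s, (p.1 * w) ⊗ₜ[ℂ] p.2 := by
      rw [hs, Finset.sum_mul]
      exact Finset.sum_congr rfl fun p _ => by
        rw [Algebra.TensorProduct.tmul_mul_tmul, mul_one]
    rw [e1, map_sum]
    have e2 : ∑ p ∈ s, (TensorProduct.map W.Δ LinearMap.id) ((p.1 * w) ⊗ₜ[ℂ] p.2)
        = (∑ p ∈ s, ((1:B) ⊗ₜ[ℂ] p.1) ⊗ₜ[ℂ] p.2) * ((W.Δ 1 * W.Δ w) ⊗ₜ[ℂ] (1:B)) := by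
      rw [show (W.Δ 1 * W.Δ w) ⊗ₜ[ℂ] (1:B) = (W.Δ 1 ⊗ₜ[ℂ] (1:B)) * (W.Δ w ⊗ₜ[ℂ] (1:B)) by
        rw [Algebra.TensorProduct.tmul_mul_tmul, mul_one]]
      rw [← mul_assoc, eA, mapΔid_rep W s hs, Finset.sum_mul]
      refine Finset.sum_congr rfl fun p _ => ?_
      rw [TensorProduct.map_tmul, Algebra.TensorProduct.tmul_mul_tmul, mul_one, W.comul_mul]
      rfl
    rw [e2, W.Δ_one_mul, Finset.sum_mul]
    refine Finset.sum_congr rfl fun p _ => ?_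
    conv_lhs => rw [ht]
    rw [TensorProduct.sum_tmul, Finset.mul_sum]
    refine Finset.sum_congr rfl fun k _ => ?_
    rw [Algebra.TensorProduct.tmul_mul_tmul, Algebra.TensorProduct.tmul_mul_tmul,
      mul_one, one_mul]
  have := congrArg (TensorProduct.map
      ((TensorProduct.rid ℂ B).toLinearMap ∘ₗ TensorProduct.map LinearMap.id W.ε) LinearMap.id)
    step1
  rw [claimA] at this
  rw [this]
  simp only [map_sum]
  rw [Finset.sum_comm, ht, map_sum]
  refine Finset.sum_congr rfl fun k _ => ?_
  rw [TensorProduct.map_tmul, εtL_rep W s hs, TensorProduct.tmul_sum]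
  refine Finset.sum_congr rfl fun p _ => ?_
  simp only [LinearMap.id_coe, id_eq, LinearMap.comp_apply, LinearEquiv.coe_toLinearMap,
    TensorProduct.map_tmul, TensorProduct.rid_tmul]
  rw [TensorProduct.smul_tmul]

end Rep2

end WHA
namespace WHA

variable {B : Type} [NormedRing B] [StarRing B] [CStarRing B] [NormedAlgebra ℂ B]
  [StarModule ℂ B] [FiniteDimensional ℂ B] (W : WHA B)

section Rep3

variable (s : Finset (B × B)) (hs : W.Δ 1 = ∑ p ∈ s, p.1 ⊗ₜ[ℂ] p.2)

include hs

lemma mapSid_D : (TensorProduct.map W.S LinearMap.id) (W.Δ 1) = ∑ p ∈ s, W.S p.1 ⊗ₜ[ℂ] p.2 := by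
  conv_lhs => rw [hs]
  simp [TensorProduct.map_tmul]

lemma mapS_sandwich (x : B) :
    (TensorProduct.map W.S LinearMap.id) (W.Δ x)
      = ∑ p ∈ s, (W.S p.1 ⊗ₜ[ℂ] (1:B)) * ((TensorProduct.map W.S LinearMap.id) (W.Δ x)) *
          ((1:B) ⊗ₜ[ℂ] p.2) := by
  obtain ⟨t, ht⟩ := TensorProduct.exists_finset (W.Δ x)
  have e1 : W.Δ x = ∑ k ∈ t, ∑ p ∈ s, (k.1 * p.1) ⊗ₜ[ℂ] (k.2 * p.2) := by
    conv_lhs => rw [← W.Δ_mul_one x]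
    rw [ht, hs, Finset.sum_mul_sum]
    exact Finset.sum_congr rfl fun k _ => Finset.sum_congr rfl fun p _ =>
      Algebra.TensorProduct.tmul_mul_tmul _ _ _ _
  conv_lhs => rw [e1]
  simp only [map_sum]
  rw [Finset.sum_comm]
  refine Finset.sum_congr rfl fun p _ => ?_
  conv_rhs => rw [ht]
  simp only [map_sum, TensorProduct.map_tmul, Finset.mul_sum, Finset.sum_mul,
    LinearMap.id_coe, id_eq]
  refine Finset.sum_congr rfl fun k _ => ?_
  rw [W.antipode_mul, Algebra.TensorProduct.tmul_mul_tmul, Algebra.TensorProduct.tmul_mul_tmul,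
    mul_one, one_mul]

lemma T62 (w : B) : W.εtL (W.ηL w) = W.εtL w := by
  rw [εtL_rep W s hs (W.ηL w), εtL_rep W s hs w]
  refine Finset.sum_congr rfl fun q _ => ?_
  congr 1
  rw [ηL_rep W s hs, Finset.mul_sum, map_sum]
  have ax := W.weak_counit q.1 1 w
  rw [hs] at ax
  simp only [map_sum, TensorProduct.map_tmul, LinearMap.comp_apply, LinearMap.mulLeft_apply,
    LinearMap.mulRight_apply, TensorProduct.lid_tmul, smul_eq_mul, mul_one, one_mul] at ax
  rw [← ax]
  refine Finset.sum_congr rfl fun p _ => ?_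
  rw [mul_smul_comm, map_smul, smul_eq_mul, mul_comm]

lemma T53 (v w : B) : W.εtL (W.εtL v * w) = W.εtL v * W.εtL w := by
  obtain ⟨t, ht⟩ := TensorProduct.exists_finset (W.Δ w)
  have hΔ : W.Δ (W.εtL v * w) = ∑ k ∈ t, (W.εtL v * k.1) ⊗ₜ[ℂ] k.2 := by
    rw [W.comul_mul, Δ_εtL W s hs, mul_assoc, W.Δ_one_mul, ht, Finset.mul_sum]
    exact Finset.sum_congr rfl fun k _ => by
      rw [Algebra.TensorProduct.tmul_mul_tmul, one_mul]
  rw [← W.antipode_left', hΔ, map_sum, ← W.antipode_left' w, ht, map_sum]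
  simp only [map_sum, TensorProduct.map_tmul, LinearMap.mul'_apply, LinearMap.id_coe, id_eq]
  rw [Finset.mul_sum]
  exact Finset.sum_congr rfl fun k _ => by rw [mul_assoc]

lemma T70 (w : B) : W.S (W.ηL w) = W.εtL w := by
  have h10 := congrArg ((TensorProduct.rid ℂ B).toLinearMap ∘ₗ
    TensorProduct.map LinearMap.id (W.ε ∘ₗ LinearMap.mulRight ℂ w)) (star10 W s hs)
  simp only [map_sum, LinearMap.comp_apply, TensorProduct.map_tmul, LinearEquiv.coe_toLinearMap,
    TensorProduct.rid_tmul, LinearMap.mulRight_apply, LinearMap.id_coe, id_eq] at h10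
  rw [← T62 W s hs w]
  conv_lhs => rw [ηL_rep W s hs w, map_sum]
  conv_rhs => rw [ηL_rep W s hs w, map_sum]
  simp only [map_smul]
  exact h10.symm

lemma crux (v : B) :
    (W.εtL v ⊗ₜ[ℂ] (1:B)) * (TensorProduct.map W.S LinearMap.id) (W.Δ 1)
      = ((TensorProduct.map W.S LinearMap.id) (W.Δ 1)) * ((1:B) ⊗ₜ[ℂ] W.εtL v) := by
  have h1 : ((TensorProduct.map W.S LinearMap.id) (W.Δ 1)) * ((1:B) ⊗ₜ[ℂ] W.εtL v)
      = (TensorProduct.map W.S LinearMap.id) (W.Δ 1 * ((1:B) ⊗ₜ[ℂ] W.εtL v)) := by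
    rw [mapSid_D W s hs]
    rw [show W.Δ 1 * ((1:B) ⊗ₜ[ℂ] W.εtL v) = ∑ p ∈ s, p.1 ⊗ₜ[ℂ] (p.2 * W.εtL v) by
      rw [hs, Finset.sum_mul]
      exact Finset.sum_congr rfl fun p _ => by
        rw [Algebra.TensorProduct.tmul_mul_tmul, mul_one]]
    rw [map_sum, Finset.sum_mul]
    refine Finset.sum_congr rfl fun p _ => ?_
    rw [TensorProduct.map_tmul, Algebra.TensorProduct.tmul_mul_tmul, mul_one]
    rfl
  rw [h1, T5d W s hs (W.εtL v), Δ_εtL W s hs v]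
  rw [show (W.εtL v ⊗ₜ[ℂ] (1:B)) * W.Δ 1 = ∑ p ∈ s, (W.εtL v * p.1) ⊗ₜ[ℂ] p.2 by
    rw [hs, Finset.mul_sum]
    exact Finset.sum_congr rfl fun p _ => by
      rw [Algebra.TensorProduct.tmul_mul_tmul, one_mul]]
  rw [map_sum, map_sum]
  simp only [TensorProduct.map_tmul, LinearMap.id_coe, id_eq]
  rw [Finset.sum_congr rfl (fun p (_ : p ∈ s) => by
    rw [T70 W s hs, T53 W s hs] :
    ∀ p ∈ s, W.S (W.ηL (W.εtL v * p.1)) ⊗ₜ[ℂ] p.2 = (W.εtL v * W.εtL p.1) ⊗ₜ[ℂ] p.2)]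
  rw [show ∑ p ∈ s, (W.εtL v * W.εtL p.1) ⊗ₜ[ℂ] p.2
      = (W.εtL v ⊗ₜ[ℂ] (1:B)) * ∑ p ∈ s, W.εtL p.1 ⊗ₜ[ℂ] p.2 by
    rw [Finset.mul_sum]
    exact Finset.sum_congr rfl fun p _ => by
      rw [Algebra.TensorProduct.tmul_mul_tmul, one_mul]]
  rw [star10 W s hs, mapSid_D W s hs]

end Rep3

/-- auxiliary bilinear sandwich map `u ⊗ w ↦ (u ⊗ 1) (S⊗id)(Δx) (1 ⊗ w)`. -/
noncomputable def sandwichM (x : B) : B ⊗[ℂ] B →ₗ[ℂ] B ⊗[ℂ] B :=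
  TensorProduct.lift (LinearMap.mk₂ ℂ
    (fun u w => (u ⊗ₜ[ℂ] (1:B)) * (TensorProduct.map W.S LinearMap.id) (W.Δ x) *
      ((1:B) ⊗ₜ[ℂ] w))
    (fun u u' w => by rw [TensorProduct.add_tmul, add_mul, add_mul])
    (fun c u w => by rw [← TensorProduct.smul_tmul', smul_mul_assoc, smul_mul_assoc])
    (fun u w w' => by rw [TensorProduct.tmul_add, mul_add])
    (fun c u w => by rw [TensorProduct.tmul_smul, mul_smul_comm]))

lemma sandwichM_tmul (x u w : B) : W.sandwichM x (u ⊗ₜ[ℂ] w)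
    = (u ⊗ₜ[ℂ] (1:B)) * (TensorProduct.map W.S LinearMap.id) (W.Δ x) * ((1:B) ⊗ₜ[ℂ] w) := by
  rw [sandwichM, TensorProduct.lift.tmul]
  rfl

section Rep4

variable (s : Finset (B × B)) (hs : W.Δ 1 = ∑ p ∈ s, p.1 ⊗ₜ[ℂ] p.2)

include hs

/-- KEY commutation: `(ε_t(v) ⊗ 1) (S ⊗ id)(Δ x) = (S ⊗ id)(Δ x) (1 ⊗ ε_t(v))`. -/
lemma key (v x : B) :
    (W.εtL v ⊗ₜ[ℂ] (1:B)) * (TensorProduct.map W.S LinearMap.id) (W.Δ x)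
      = ((TensorProduct.map W.S LinearMap.id) (W.Δ x)) * ((1:B) ⊗ₜ[ℂ] W.εtL v) := by
  have hXp : (W.εtL v ⊗ₜ[ℂ] (1:B)) * (TensorProduct.map W.S LinearMap.id) (W.Δ 1)
      = ∑ p ∈ s, (W.εtL v * W.S p.1) ⊗ₜ[ℂ] p.2 := by
    rw [mapSid_D W s hs, Finset.mul_sum]
    exact Finset.sum_congr rfl fun p _ => by
      rw [Algebra.TensorProduct.tmul_mul_tmul, one_mul]
  have hYp : ((TensorProduct.map W.S LinearMap.id) (W.Δ 1)) * ((1:B) ⊗ₜ[ℂ] W.εtL v)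
      = ∑ p ∈ s, W.S p.1 ⊗ₜ[ℂ] (p.2 * W.εtL v) := by
    rw [mapSid_D W s hs, Finset.sum_mul]
    exact Finset.sum_congr rfl fun p _ => by
      rw [Algebra.TensorProduct.tmul_mul_tmul, mul_one]
  have e1 : (W.εtL v ⊗ₜ[ℂ] (1:B)) * (TensorProduct.map W.S LinearMap.id) (W.Δ x)
      = W.sandwichM x ((W.εtL v ⊗ₜ[ℂ] (1:B)) * (TensorProduct.map W.S LinearMap.id) (W.Δ 1)) := by
    rw [hXp, map_sum]
    rw [Finset.sum_congr rfl fun p (_ : p ∈ s) => W.sandwichM_tmul x (W.εtL v * W.S p.1) p.2]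
    conv_lhs => rw [mapS_sandwich W s hs x, Finset.mul_sum]
    refine Finset.sum_congr rfl fun p _ => ?_
    rw [show (W.εtL v * W.S p.1) ⊗ₜ[ℂ] (1:B)
        = (W.εtL v ⊗ₜ[ℂ] (1:B)) * (W.S p.1 ⊗ₜ[ℂ] (1:B)) by
      rw [Algebra.TensorProduct.tmul_mul_tmul, one_mul]]
    simp only [mul_assoc]
  have e2 : ((TensorProduct.map W.S LinearMap.id) (W.Δ x)) * ((1:B) ⊗ₜ[ℂ] W.εtL v)
      = W.sandwichM x (((TensorProduct.map W.S LinearMap.id) (W.Δ 1)) * ((1:B) ⊗ₜ[ℂ] W.εtL v)) := by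
    rw [hYp, map_sum]
    rw [Finset.sum_congr rfl fun p (_ : p ∈ s) => W.sandwichM_tmul x (W.S p.1) (p.2 * W.εtL v)]
    conv_lhs => rw [mapS_sandwich W s hs x, Finset.sum_mul]
    refine Finset.sum_congr rfl fun p _ => ?_
    rw [show (1:B) ⊗ₜ[ℂ] (p.2 * W.εtL v)
        = ((1:B) ⊗ₜ[ℂ] p.2) * ((1:B) ⊗ₜ[ℂ] W.εtL v) by
      rw [Algebra.TensorProduct.tmul_mul_tmul, one_mul]]
    simp only [mul_assoc]
  rw [e1, e2, crux W s hs v]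

end Rep4

end WHA
namespace WHA

variable {B : Type} [NormedRing B] [StarRing B] [CStarRing B] [NormedAlgebra ℂ B]
  [StarModule ℂ B] [FiniteDimensional ℂ B] (W : WHA B)

/-- the adjoint action `x ↦ b ◁ x` as a linear map in `x`. -/
noncomputable def adL (c : B) : B →ₗ[ℂ] B :=
  LinearMap.mul' ℂ B ∘ₗ TensorProduct.map W.S (LinearMap.mulLeft ℂ c) ∘ₗ W.Δ

lemma adL_apply (c x : B) : W.adL c x = W.ad c x := rfl

lemma ad_rep (c x : B) (t : Finset (B × B)) (ht : W.Δ x = ∑ k ∈ t, k.1 ⊗ₜ[ℂ] k.2) :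
    W.ad c x = ∑ k ∈ t, W.S k.1 * (c * k.2) := by
  unfold ad
  rw [ht]
  simp only [map_sum, TensorProduct.map_tmul, LinearMap.mul'_apply, LinearMap.mulLeft_apply]

lemma ad_one (x : B) : W.ad 1 x = W.εs x := by
  unfold ad
  rw [LinearMap.mulLeft_one]
  exact W.antipode_right x

lemma ad_add_left (b c x : B) : W.ad (b + c) x = W.ad b x + W.ad c x := by
  obtain ⟨t, ht⟩ := TensorProduct.exists_finset (W.Δ x)
  rw [ad_rep W b x t ht, ad_rep W c x t ht, ad_rep W (b+c) x t ht, ← Finset.sum_add_distrib]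
  exact Finset.sum_congr rfl fun k _ => by rw [add_mul, mul_add]

lemma ad_smul_left (r : ℂ) (b x : B) : W.ad (r • b) x = r • W.ad b x := by
  obtain ⟨t, ht⟩ := TensorProduct.exists_finset (W.Δ x)
  rw [ad_rep W b x t ht, ad_rep W (r • b) x t ht, Finset.smul_sum]
  exact Finset.sum_congr rfl fun k _ => by rw [smul_mul_assoc, mul_smul_comm]

lemma εt_mem_Bt (y : B) : W.εt y ∈ W.Bt := Submodule.subset_span ⟨y, rfl⟩

/-- elements of the form `b ◁ x` commute with `ε_t(y)`. -/
lemma ad_comm_εt (c x y : B) : W.ad c x * W.εt y = W.εt y * W.ad c x := by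
  obtain ⟨s, hs⟩ := TensorProduct.exists_finset (W.Δ 1)
  obtain ⟨t, ht⟩ := TensorProduct.exists_finset (W.Δ x)
  have k := congrArg
    (LinearMap.mul' ℂ B ∘ₗ TensorProduct.map (LinearMap.mulRight ℂ c) LinearMap.id)
    (key W s hs y x)
  rw [ht] at k
  simp only [map_sum, Finset.mul_sum, Finset.sum_mul, TensorProduct.map_tmul,
    Algebra.TensorProduct.tmul_mul_tmul, LinearMap.comp_apply, LinearMap.mul'_apply,
    LinearMap.mulRight_apply, LinearMap.id_coe, id_eq, one_mul, mul_one, mul_assoc] at k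
  rw [ad_rep W c x t ht, ← εtL_apply, Finset.sum_mul, Finset.mul_sum]
  simp only [mul_assoc]
  exact k.symm

/-- for `b` commuting with `B_t`, `b ◁ 1 = b`. -/
lemma ad_one_right (b : B) (hb : ∀ z ∈ W.Bt, b * z = z * b) : W.ad b 1 = b := by
  obtain ⟨s, hs⟩ := TensorProduct.exists_finset (W.Δ 1)
  rw [ad_rep W b 1 s hs]
  have h10 := congrArg
    (LinearMap.mul' ℂ B ∘ₗ TensorProduct.map (LinearMap.mulRight ℂ b) LinearMap.id)
    (star10 W s hs)
  simp only [map_sum, LinearMap.comp_apply, TensorProduct.map_tmul, LinearMap.mul'_apply,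
    LinearMap.mulRight_apply, LinearMap.id_coe, id_eq] at h10
  have h10' := congrArg (LinearMap.mul' ℂ B) (star10 W s hs)
  simp only [map_sum, LinearMap.mul'_apply] at h10'
  calc ∑ p ∈ s, W.S p.1 * (b * p.2) = ∑ p ∈ s, W.S p.1 * b * p.2 := by
        exact Finset.sum_congr rfl fun p _ => by rw [mul_assoc]
    _ = ∑ p ∈ s, W.εtL p.1 * b * p.2 := h10.symm
    _ = ∑ p ∈ s, b * (W.εtL p.1 * p.2) := by
        refine Finset.sum_congr rfl fun p _ => ?_
        rw [show W.εtL p.1 * b = b * W.εtL p.1 from (hb (W.εt p.1) (W.εt_mem_Bt p.1)).symm,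
          mul_assoc]
    _ = b * ∑ p ∈ s, W.εtL p.1 * p.2 := by rw [Finset.mul_sum]
    _ = b * ∑ p ∈ s, W.S p.1 * p.2 := by rw [h10']
    _ = b := by rw [sum_S_mul W s hs, mul_one]

/-- `∑ w₁ S(w₂) ε_t`-collapse: `(mul ∘ (S ⊗ ε_t))(Δ w) = S w`. -/
lemma Vm_eq (w : B) :
    LinearMap.mul' ℂ B ((TensorProduct.map W.S W.εtL) (W.Δ w)) = W.S w := by
  obtain ⟨s, hs⟩ := TensorProduct.exists_finset (W.Δ 1)
  obtain ⟨t, ht⟩ := TensorProduct.exists_finset (W.Δ w)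
  have e1 : (TensorProduct.map W.S W.εtL) (W.Δ w)
      = (TensorProduct.map W.S LinearMap.id) ((TensorProduct.map LinearMap.id W.εtL) (W.Δ w)) := by
    rw [ht]
    simp only [map_sum, TensorProduct.map_tmul, LinearMap.id_coe, id_eq]
  rw [e1, ← T5 W s hs w]
  rw [show W.Δ 1 * (w ⊗ₜ[ℂ] (1:B)) = ∑ p ∈ s, (p.1 * w) ⊗ₜ[ℂ] p.2 by
    rw [hs, Finset.sum_mul]
    exact Finset.sum_congr rfl fun p _ => by rw [Algebra.TensorProduct.tmul_mul_tmul, mul_one]]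
  simp only [map_sum, TensorProduct.map_tmul, LinearMap.mul'_apply, LinearMap.id_coe, id_eq,
    W.antipode_mul]
  calc ∑ p ∈ s, W.S w * W.S p.1 * p.2 = W.S w * ∑ p ∈ s, W.S p.1 * p.2 := by
        rw [Finset.mul_sum]
        exact Finset.sum_congr rfl fun p _ => by rw [mul_assoc]
    _ = W.S w := by rw [sum_S_mul W s hs, mul_one]

/-- the `ε_t`-contraction form of `∑ w₁ (c ◁ w₂)`. -/
lemma SC (c w : B) :
    LinearMap.mul' ℂ B ((TensorProduct.map LinearMap.id (W.adL c)) (W.Δ w))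
      = LinearMap.mul' ℂ B ((TensorProduct.map W.εtL (LinearMap.mulLeft ℂ c)) (W.Δ w)) := by
  obtain ⟨t, ht⟩ := TensorProduct.exists_finset (W.Δ w)
  have step1 : LinearMap.mul' ℂ B ((TensorProduct.map LinearMap.id (W.adL c)) (W.Δ w))
      = (LinearMap.mul' ℂ B ∘ₗ TensorProduct.map LinearMap.id
          (LinearMap.mul' ℂ B ∘ₗ TensorProduct.map W.S (LinearMap.mulLeft ℂ c)))
        ((TensorProduct.map LinearMap.id W.Δ) (W.Δ w)) := by
    rw [ht]
    simp only [map_sum, TensorProduct.map_tmul, LinearMap.comp_apply, LinearMap.mul'_apply,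
      LinearMap.id_coe, id_eq]
    rfl
  have P1 : ∀ T : (B ⊗[ℂ] B) ⊗[ℂ] B,
      (LinearMap.mul' ℂ B ∘ₗ TensorProduct.map LinearMap.id
          (LinearMap.mul' ℂ B ∘ₗ TensorProduct.map W.S (LinearMap.mulLeft ℂ c)))
        ((TensorProduct.assoc ℂ B B B) T)
      = (LinearMap.mul' ℂ B ∘ₗ TensorProduct.map
          (LinearMap.mul' ℂ B ∘ₗ TensorProduct.map LinearMap.id W.S)
          (LinearMap.mulLeft ℂ c)) T := by
    intro T
    induction T using TensorProduct.induction_on with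
    | zero => simp
    | add a b ha hb => rw [map_add, map_add, map_add, ha, hb]
    | tmul P z =>
      induction P using TensorProduct.induction_on with
      | zero => simp
      | add a b ha hb =>
        rw [TensorProduct.add_tmul, map_add, map_add, map_add, ha, hb]
      | tmul u v =>
        rw [TensorProduct.assoc_tmul]
        simp only [LinearMap.comp_apply, TensorProduct.map_tmul, LinearMap.mul'_apply,
          LinearMap.id_coe, id_eq, LinearMap.mulLeft_apply]
        rw [mul_assoc]
  rw [step1, ← W.coassoc w, P1]
  rw [ht]
  simp only [map_sum, TensorProduct.map_tmul, LinearMap.comp_apply, LinearMap.mul'_apply,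
    LinearMap.id_coe, id_eq, LinearMap.mulLeft_apply, W.antipode_left']

/-- multiplicativity of the adjoint action against elements commuting with `B_t`. -/
lemma ad_mul_left (b c x : B) (hb : ∀ z ∈ W.Bt, b * z = z * b)
    (t : Finset (B × B)) (ht : W.Δ x = ∑ k ∈ t, k.1 ⊗ₜ[ℂ] k.2) :
    W.ad (b * c) x = ∑ k ∈ t, W.ad b k.1 * W.ad c k.2 := by
  obtain ⟨s, hs⟩ := TensorProduct.exists_finset (W.Δ 1)
  -- step 1: RHS = Ω (T3)
  have step1 : ∑ k ∈ t, W.ad b k.1 * W.ad c k.2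
      = (LinearMap.mul' ℂ B ∘ₗ TensorProduct.map
          (LinearMap.mul' ℂ B ∘ₗ TensorProduct.map W.S (LinearMap.mulLeft ℂ b)) (W.adL c))
        ((TensorProduct.map W.Δ LinearMap.id) (W.Δ x)) := by
    rw [ht]
    simp only [map_sum, TensorProduct.map_tmul, LinearMap.comp_apply, LinearMap.mul'_apply,
      LinearMap.id_coe, id_eq]
    rfl
  have P1 : ∀ T : (B ⊗[ℂ] B) ⊗[ℂ] B,
      (LinearMap.mul' ℂ B ∘ₗ TensorProduct.map
          (LinearMap.mul' ℂ B ∘ₗ TensorProduct.map W.S (LinearMap.mulLeft ℂ b)) (W.adL c)) T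
      = (LinearMap.mul' ℂ B ∘ₗ TensorProduct.map (LinearMap.mulRight ℂ b ∘ₗ W.S)
          (LinearMap.mul' ℂ B ∘ₗ TensorProduct.map LinearMap.id (W.adL c)))
        ((TensorProduct.assoc ℂ B B B) T) := by
    intro T
    induction T using TensorProduct.induction_on with
    | zero => simp
    | add a b ha hb => rw [map_add, map_add, map_add, ha, hb]
    | tmul P z =>
      induction P using TensorProduct.induction_on with
      | zero => simp
      | add a b ha hb =>
        rw [TensorProduct.add_tmul, map_add, map_add, map_add, ha, hb]
      | tmul u v =>
        rw [TensorProduct.assoc_tmul]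
        simp only [LinearMap.comp_apply, TensorProduct.map_tmul, LinearMap.mul'_apply,
          LinearMap.id_coe, id_eq, LinearMap.mulLeft_apply, LinearMap.mulRight_apply]
        simp only [mul_assoc]
  rw [step1, P1, W.coassoc x, ht]
  simp only [map_sum, TensorProduct.map_tmul, LinearMap.comp_apply, LinearMap.mul'_apply,
    LinearMap.id_coe, id_eq, LinearMap.mulRight_apply]
  -- now: ∑_k (S k1 * b) * mul'((map id (adL c))(Δ k2))
  have step2 : ∀ k ∈ t, W.S k.1 * b * (LinearMap.mul' ℂ B
        ((TensorProduct.map LinearMap.id (W.adL c)) (W.Δ k.2)))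
      = W.S k.1 * (LinearMap.mul' ℂ B
        ((TensorProduct.map W.εtL (LinearMap.mulLeft ℂ (b * c))) (W.Δ k.2))) := by
    intro k _
    rw [SC]
    obtain ⟨n, hn⟩ := TensorProduct.exists_finset (W.Δ k.2)
    rw [hn]
    simp only [map_sum, TensorProduct.map_tmul, LinearMap.mul'_apply, LinearMap.mulLeft_apply,
      Finset.mul_sum]
    refine Finset.sum_congr rfl fun r _ => ?_
    simp only [εtL_apply]
    rw [mul_assoc (W.S k.1) b, ← mul_assoc b (W.εt r.1), hb (W.εt r.1) (W.εt_mem_Bt r.1)]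
    simp only [mul_assoc]
  rw [Finset.sum_congr rfl step2]
  -- = ∑_k S k1 * mul'((map εtL (mulLeft (b*c)))(Δ k2)) ; now contract back
  have P2 : ∀ T : (B ⊗[ℂ] B) ⊗[ℂ] B,
      (LinearMap.mul' ℂ B ∘ₗ TensorProduct.map W.S
          (LinearMap.mul' ℂ B ∘ₗ TensorProduct.map W.εtL (LinearMap.mulLeft ℂ (b * c))))
        ((TensorProduct.assoc ℂ B B B) T)
      = (LinearMap.mul' ℂ B ∘ₗ TensorProduct.map
          (LinearMap.mulRight ℂ (b * c) ∘ₗ LinearMap.mul' ℂ B ∘ₗ TensorProduct.map W.S W.εtL)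
          LinearMap.id) T := by
    intro T
    induction T using TensorProduct.induction_on with
    | zero => simp
    | add a b ha hb => rw [map_add, map_add, map_add, ha, hb]
    | tmul P z =>
      induction P using TensorProduct.induction_on with
      | zero => simp
      | add a b ha hb =>
        rw [TensorProduct.add_tmul, map_add, map_add, map_add, ha, hb]
      | tmul u v =>
        rw [TensorProduct.assoc_tmul]
        simp only [LinearMap.comp_apply, TensorProduct.map_tmul, LinearMap.mul'_apply,
          LinearMap.id_coe, id_eq, LinearMap.mulLeft_apply, LinearMap.mulRight_apply]
        simp only [mul_assoc]
  have step3 : ∑ k ∈ t, W.S k.1 * (LinearMap.mul' ℂ B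
        ((TensorProduct.map W.εtL (LinearMap.mulLeft ℂ (b * c))) (W.Δ k.2)))
      = (LinearMap.mul' ℂ B ∘ₗ TensorProduct.map W.S
          (LinearMap.mul' ℂ B ∘ₗ TensorProduct.map W.εtL (LinearMap.mulLeft ℂ (b * c))))
        ((TensorProduct.map LinearMap.id W.Δ) (W.Δ x)) := by
    rw [ht]
    simp only [map_sum, TensorProduct.map_tmul, LinearMap.comp_apply, LinearMap.mul'_apply,
      LinearMap.id_coe, id_eq]
  rw [step3, ← W.coassoc x, P2, ht]
  simp only [map_sum, TensorProduct.map_tmul, LinearMap.comp_apply, LinearMap.mul'_apply,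
    LinearMap.id_coe, id_eq, LinearMap.mulRight_apply, Vm_eq]
  rw [ad_rep W (b*c) x t ht]
  exact Finset.sum_congr rfl fun k _ => by simp only [mul_assoc]

end WHA
namespace WHA

variable {B : Type} [NormedRing B] [StarRing B] [CStarRing B] [NormedAlgebra ℂ B]
  [StarModule ℂ B] [FiniteDimensional ℂ B] (W : WHA B)

lemma pi_mem (P : Submodule ℂ B) (f : B →ₗ[ℂ] ℂ) {t : B ⊗[ℂ] B}
    (h : t ∈ Submodule.span ℂ {x : B ⊗[ℂ] B | ∃ u ∈ P, ∃ v : B, x = u ⊗ₜ[ℂ] v}) :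
    (TensorProduct.rid ℂ B) ((TensorProduct.map LinearMap.id f) t) ∈ P := by
  induction h using Submodule.span_induction with
  | mem x hx =>
    obtain ⟨u, hu, v, rfl⟩ := hx
    rw [TensorProduct.map_tmul]
    simp only [LinearMap.id_coe, id_eq, TensorProduct.rid_tmul]
    exact P.smul_mem _ hu
  | zero => simp
  | add x y _ _ hx hy => rw [map_add, map_add]; exact P.add_mem hx hy
  | smul c x _ hx => rw [map_smul, map_smul]; exact P.smul_mem c hx

lemma tensor_reconstruct (t : B ⊗[ℂ] B) :
    t = ∑ j, ((TensorProduct.rid ℂ B) ((TensorProduct.map LinearMap.id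
        ((Module.finBasis ℂ B).coord j)) t)) ⊗ₜ[ℂ] (Module.finBasis ℂ B j) := by
  induction t using TensorProduct.induction_on with
  | zero => simp
  | add a b ha hb =>
    conv_lhs => rw [ha, hb]
    rw [← Finset.sum_add_distrib]
    refine Finset.sum_congr rfl fun j _ => ?_
    rw [map_add, map_add, TensorProduct.add_tmul]
  | tmul x y =>
    have e : ∀ j : Fin (Module.finrank ℂ B),
        ((TensorProduct.rid ℂ B) ((TensorProduct.map LinearMap.id
          ((Module.finBasis ℂ B).coord j)) (x ⊗ₜ[ℂ] y))) ⊗ₜ[ℂ] (Module.finBasis ℂ B j)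
        = x ⊗ₜ[ℂ] (((Module.finBasis ℂ B).repr y) j • Module.finBasis ℂ B j) := by
      intro j
      rw [TensorProduct.map_tmul]
      simp only [LinearMap.id_coe, id_eq, TensorProduct.rid_tmul, Module.Basis.coord_apply]
      rw [TensorProduct.smul_tmul]
    rw [Finset.sum_congr rfl fun j _ => e j, ← TensorProduct.tmul_sum,
      (Module.finBasis ℂ B).sum_repr y]

lemma span_tmul_inf (P Q : Submodule ℂ B) {t : B ⊗[ℂ] B}
    (hP : t ∈ Submodule.span ℂ {x : B ⊗[ℂ] B | ∃ u ∈ P, ∃ v : B, x = u ⊗ₜ[ℂ] v})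
    (hQ : t ∈ Submodule.span ℂ {x : B ⊗[ℂ] B | ∃ u ∈ Q, ∃ v : B, x = u ⊗ₜ[ℂ] v}) :
    t ∈ Submodule.span ℂ {x : B ⊗[ℂ] B | ∃ u ∈ P ⊓ Q, ∃ v : B, x = u ⊗ₜ[ℂ] v} := by
  rw [tensor_reconstruct t]
  refine Submodule.sum_mem _ fun j _ => Submodule.subset_span
    ⟨_, ⟨pi_mem P _ hP, pi_mem Q _ hQ⟩, _, rfl⟩

lemma span_tmul_mul {Pset : Set B} (hmul : ∀ u ∈ Pset, ∀ u' ∈ Pset, u * u' ∈ Pset)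
    {t u : B ⊗[ℂ] B}
    (ht : t ∈ Submodule.span ℂ {x : B ⊗[ℂ] B | ∃ w ∈ Pset, ∃ v : B, x = w ⊗ₜ[ℂ] v})
    (hu : u ∈ Submodule.span ℂ {x : B ⊗[ℂ] B | ∃ w ∈ Pset, ∃ v : B, x = w ⊗ₜ[ℂ] v}) :
    t * u ∈ Submodule.span ℂ {x : B ⊗[ℂ] B | ∃ w ∈ Pset, ∃ v : B, x = w ⊗ₜ[ℂ] v} := by
  induction ht using Submodule.span_induction with
  | mem x hx =>
    obtain ⟨w, hw, v, rfl⟩ := hx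
    induction hu using Submodule.span_induction with
    | mem y hy =>
      obtain ⟨w', hw', v', rfl⟩ := hy
      rw [Algebra.TensorProduct.tmul_mul_tmul]
      exact Submodule.subset_span ⟨_, hmul w hw w' hw', _, rfl⟩
    | zero => rw [mul_zero]; exact Submodule.zero_mem _
    | add a b _ _ ha hb => rw [mul_add]; exact Submodule.add_mem _ ha hb
    | smul c a _ ha => rw [mul_smul_comm]; exact Submodule.smul_mem _ c ha
  | zero => rw [zero_mul]; exact Submodule.zero_mem _
  | add a b _ _ ha hb => rw [add_mul]; exact Submodule.add_mem _ ha hb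
  | smul c a _ ha => rw [smul_mul_assoc]; exact Submodule.smul_mem _ c ha

lemma ad_comm_Bt (c x : B) : ∀ z ∈ W.Bt, W.ad c x * z = z * W.ad c x := by
  intro z hz
  induction hz using Submodule.span_induction with
  | mem w hw => obtain ⟨y, rfl⟩ := hw; exact W.ad_comm_εt c x y
  | zero => simp
  | add u v _ _ hu hv => rw [mul_add, add_mul, hu, hv]
  | smul r u _ hu => rw [mul_smul_comm, smul_mul_assoc, hu]

lemma mem_of_ad {I : Submodule ℂ B} (hInv : W.IsInvariant I) {b : B} (hb : b ∈ I) (x : B) :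
    W.ad b x ∈ I := by
  rw [← hInv]
  exact Submodule.subset_span ⟨b, hb, x, rfl⟩

lemma invariant_subset_commutant (J : Submodule ℂ B) (hInvJ : W.IsInvariant J) :
    (J : Set B) ⊆ {b : B | ∀ z ∈ W.Bt, b * z = z * b} := by
  intro b hb
  rw [SetLike.mem_coe, ← hInvJ] at hb
  intro z hz
  induction hb using Submodule.span_induction with
  | mem y hy =>
    obtain ⟨c, _, x, rfl⟩ := hy
    exact W.ad_comm_Bt c x z hz
  | zero => simp
  | add u v _ _ hu hv => rw [add_mul, mul_add, hu, hv]
  | smul r u _ hu => rw [smul_mul_assoc, mul_smul_comm, hu]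

lemma Bs_le_invariant (J : Submodule ℂ B) (hJ : W.IsCoideal J) (hInvJ : W.IsInvariant J) :
    W.Bs ≤ J := by
  refine Submodule.span_le.mpr ?_
  rintro y ⟨x, rfl⟩
  rw [← W.ad_one x]
  exact W.mem_of_ad hInvJ hJ.1 x

end WHA

/-- invariant coideals form a sublattice of the lattice of coideals,
with minimal element `B_s` and maximal element the commutant of `B_t`. -/
theorem invariant_coideals_sublattice {B : Type} [NormedRing B] [StarRing B] [CStarRing B]
    [NormedAlgebra ℂ B] [StarModule ℂ B] [FiniteDimensional ℂ B] (W : WHA B)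
    (I I' : Submodule ℂ B)
    (hI : W.IsCoideal I) (hI' : W.IsCoideal I')
    (hInv : W.IsInvariant I) (hInv' : W.IsInvariant I') :
    -- the intersection is an invariant coideal
    (W.IsCoideal (I ⊓ I') ∧ W.IsInvariant (I ⊓ I')) ∧
    -- the `*`-subalgebra generated by the union is an invariant coideal
    (W.IsCoideal (Subalgebra.toSubmodule (Algebra.adjoin ℂ ((I : Set B) ∪ (I' : Set B)))) ∧
      W.IsInvariant (Subalgebra.toSubmodule (Algebra.adjoin ℂ ((I : Set B) ∪ (I' : Set B))))) ∧
    -- every invariant coideal contains `B_s` and is contained in the commutant of `B_t`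
    (∀ J : Submodule ℂ B, W.IsCoideal J → W.IsInvariant J →
      W.Bs ≤ J ∧ (J : Set B) ⊆ {b : B | ∀ z ∈ W.Bt, b * z = z * b}) := by
  have commI := W.invariant_subset_commutant I hInv
  have commI' := W.invariant_subset_commutant I' hInv'
  set A := Algebra.adjoin ℂ ((I : Set B) ∪ (I' : Set B)) with hA
  have commA : ∀ a ∈ A, ∀ z ∈ W.Bt, a * z = z * a := by
    intro a ha
    induction ha using Algebra.adjoin_induction with
    | mem x hx =>
      cases hx with
      | inl h => exact commI h
      | inr h => exact commI' h
    | algebraMap r =>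
      intro z _
      rw [Algebra.algebraMap_eq_smul_one, smul_mul_assoc, one_mul, mul_smul_comm, mul_one]
    | add x y hx hy ihx ihy =>
      intro z hz
      rw [add_mul, mul_add, ihx z hz, ihy z hz]
    | mul x y hx hy ihx ihy =>
      intro z hz
      rw [mul_assoc, ihy z hz, ← mul_assoc, ihx z hz, mul_assoc]
  have starA : ∀ a ∈ A, star a ∈ A := by
    intro a ha
    induction ha using Algebra.adjoin_induction with
    | mem x hx =>
      cases hx with
      | inl h => exact Algebra.subset_adjoin (Set.mem_union_left _ (hI.2.2.1 x h))
      | inr h => exact Algebra.subset_adjoin (Set.mem_union_right _ (hI'.2.2.1 x h))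
    | algebraMap r =>
      rw [Algebra.algebraMap_eq_smul_one, star_smul, star_one]
      exact A.smul_mem A.one_mem _
    | add x y _ _ ihx ihy => rw [star_add]; exact A.add_mem ihx ihy
    | mul x y _ _ ihx ihy => rw [star_mul]; exact A.mul_mem ihy ihx
  have adA : ∀ a ∈ A, ∀ x : B, W.ad a x ∈ A := by
    intro a ha
    induction ha using Algebra.adjoin_induction with
    | mem b hb =>
      intro x
      cases hb with
      | inl h => exact Algebra.subset_adjoin (Set.mem_union_left _ (W.mem_of_ad hInv h x))
      | inr h => exact Algebra.subset_adjoin (Set.mem_union_right _ (W.mem_of_ad hInv' h x))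
    | algebraMap r =>
      intro x
      rw [Algebra.algebraMap_eq_smul_one, W.ad_smul_left]
      exact A.smul_mem
        (Algebra.subset_adjoin (Set.mem_union_left _
          (by rw [W.ad_one]; exact W.ad_one x ▸ W.mem_of_ad hInv hI.1 x))) r
    | add x y _ _ ihx ihy =>
      intro x0
      rw [W.ad_add_left]
      exact A.add_mem (ihx x0) (ihy x0)
    | mul x y hx hy ihx ihy =>
      intro x0
      obtain ⟨t, ht⟩ := TensorProduct.exists_finset (W.Δ x0)
      rw [W.ad_mul_left x y x0 (commA x hx) t ht]
      exact Finset.sum_induction _ (· ∈ A) (fun _ _ => A.add_mem) A.zero_mem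
        (fun k _ => A.mul_mem (ihx k.1) (ihy k.2))
  have ΔA : ∀ a ∈ A, W.Δ a ∈ Submodule.span ℂ
      {x : B ⊗[ℂ] B | ∃ u ∈ Subalgebra.toSubmodule A, ∃ v : B, x = u ⊗ₜ[ℂ] v} := by
    have hsub : ∀ (K : Submodule ℂ B), (K : Set B) ⊆ (A : Set B) →
        {x : B ⊗[ℂ] B | ∃ u ∈ K, ∃ v : B, x = u ⊗ₜ[ℂ] v} ⊆
        {x : B ⊗[ℂ] B | ∃ u ∈ Subalgebra.toSubmodule A, ∃ v : B, x = u ⊗ₜ[ℂ] v} := by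
      rintro K hK x ⟨u, hu, v, rfl⟩
      exact ⟨u, (Subalgebra.mem_toSubmodule A).mpr (hK hu), v, rfl⟩
    have hIA : (I : Set B) ⊆ (A : Set B) :=
      fun u hu => Algebra.subset_adjoin (Set.mem_union_left _ hu)
    have hI'A : (I' : Set B) ⊆ (A : Set B) :=
      fun u hu => Algebra.subset_adjoin (Set.mem_union_right _ hu)
    intro a ha
    induction ha using Algebra.adjoin_induction with
    | mem b hb =>
      cases hb with
      | inl h => exact Submodule.span_mono (hsub I hIA) (hI.2.2.2 b h)
      | inr h => exact Submodule.span_mono (hsub I' hI'A) (hI'.2.2.2 b h)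
    | algebraMap r =>
      rw [Algebra.algebraMap_eq_smul_one, map_smul]
      exact Submodule.smul_mem _ _ (Submodule.span_mono (hsub I hIA) (hI.2.2.2 1 hI.1))
    | add x y _ _ ihx ihy =>
      rw [map_add]
      exact Submodule.add_mem _ ihx ihy
    | mul x y _ _ ihx ihy =>
      rw [W.comul_mul]
      refine WHA.span_tmul_mul (Pset := (Subalgebra.toSubmodule A : Set B)) ?_ ihx ihy
      intro u hu u' hu'
      rw [SetLike.mem_coe, Subalgebra.mem_toSubmodule] at *
      exact A.mul_mem hu hu'
  have coidealInf : W.IsCoideal (I ⊓ I') := by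
    refine ⟨Submodule.mem_inf.mpr ⟨hI.1, hI'.1⟩, ?_, ?_, ?_⟩
    · intro a ha b hb
      obtain ⟨ha1, ha2⟩ := Submodule.mem_inf.mp ha
      obtain ⟨hb1, hb2⟩ := Submodule.mem_inf.mp hb
      exact Submodule.mem_inf.mpr ⟨hI.2.1 a ha1 b hb1, hI'.2.1 a ha2 b hb2⟩
    · intro a ha
      obtain ⟨ha1, ha2⟩ := Submodule.mem_inf.mp ha
      exact Submodule.mem_inf.mpr ⟨hI.2.2.1 a ha1, hI'.2.2.1 a ha2⟩
    · intro a ha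
      obtain ⟨ha1, ha2⟩ := Submodule.mem_inf.mp ha
      exact WHA.span_tmul_inf I I' (hI.2.2.2 a ha1) (hI'.2.2.2 a ha2)
  have invInf : W.IsInvariant (I ⊓ I') := by
    apply le_antisymm
    · refine Submodule.span_le.mpr ?_
      rintro y ⟨b, hb, x, rfl⟩
      obtain ⟨hb1, hb2⟩ := Submodule.mem_inf.mp hb
      exact Submodule.mem_inf.mpr ⟨W.mem_of_ad hInv hb1 x, W.mem_of_ad hInv' hb2 x⟩
    · intro b hb
      refine Submodule.subset_span ⟨b, hb, 1, ?_⟩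
      exact (W.ad_one_right b (commI (Submodule.mem_inf.mp hb).1)).symm
  have coidealA : W.IsCoideal (Subalgebra.toSubmodule A) := by
    refine ⟨(Subalgebra.mem_toSubmodule A).mpr A.one_mem, ?_, ?_, ?_⟩
    · intro a ha b hb
      rw [Subalgebra.mem_toSubmodule] at *
      exact A.mul_mem ha hb
    · intro a ha
      rw [Subalgebra.mem_toSubmodule] at *
      exact starA a ha
    · intro a ha
      exact ΔA a ((Subalgebra.mem_toSubmodule A).mp ha)
  have invA : W.IsInvariant (Subalgebra.toSubmodule A) := by
    apply le_antisymm
    · refine Submodule.span_le.mpr ?_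
      rintro y ⟨b, hb, x, rfl⟩
      rw [SetLike.mem_coe, Subalgebra.mem_toSubmodule]
      exact adA b ((Subalgebra.mem_toSubmodule A).mp hb) x
    · intro b hb
      refine Submodule.subset_span ⟨b, hb, 1, ?_⟩
      exact (W.ad_one_right b (commA b ((Subalgebra.mem_toSubmodule A).mp hb))).symm
  exact ⟨⟨coidealInf, invInf⟩, ⟨coidealA, invA⟩,
    fun J hJ hInvJ => ⟨W.Bs_le_invariant J hJ hInvJ, W.invariant_subset_commutant J hInvJ⟩⟩

end
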